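/- Let λ_M ≥ 0, 0 < c_u ≤ 1, let n_l ≥ 1 be a natural number, and suppose γ ≥ n_l^{3/2} and γ ≥ λ_M. Then 2·[ √2/(γ + 1) + √(2 n_l)·((1 − √c_u)/√c_u)·(λ_M + γ)/(γ² + 1) ] ≤ (2√2 + 4√2·(1 − √c_u)/√c_u)/n_l; i.e., when the regularizer satisfies γ_g = Ω(n_l^{3/2}), the stability coefficient β of the relaxed harmonic function solution is O(1/n_l). -/

import Mathlib

/-- When `γ ≥ n_l^{3/2}` (and `γ ≥ λ_M`), the bound on the
stability coefficient of the relaxed harmonic function solution is `O(1/n_l)`: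
`2[√2/(γ+1) + √(2 n_l)((1−√c_u)/√c_u)(λ_M+γ)/(γ²+1)]
  ≤ (2√2 + 4√2 (1−√c_u)/√c_u)/n_l`. -/
theorem stability_coefficient_O_one_over_nl
    (lM γ cu : ℝ) (nl : ℕ)
    (hlM : 0 ≤ lM) (hcu0 : 0 < cu) (hcu1 : cu ≤ 1) (hnl : 1 ≤ nl)
    (hγ1 : (nl : ℝ) ^ ((3 : ℝ) / 2) ≤ γ) (hγ2 : lM ≤ γ) :
    2 * (Real.sqrt 2 / (γ + 1) +
        Real.sqrt (2 * nl) * ((1 - Real.sqrt cu) / Real.sqrt cu) *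
          (lM + γ) / (γ ^ 2 + 1)) ≤
    (2 * Real.sqrt 2 +
        4 * Real.sqrt 2 * ((1 - Real.sqrt cu) / Real.sqrt cu)) / nl := by
  set s : ℝ := (1 - Real.sqrt cu) / Real.sqrt cu with hs
  have hnl1 : (1 : ℝ) ≤ (nl : ℝ) := by exact_mod_cast hnl
  have hnlpos : (0 : ℝ) < (nl : ℝ) := by linarith
  have hsqrtnl : (1 : ℝ) ≤ Real.sqrt nl := by
    rw [show (1:ℝ) = Real.sqrt 1 by simp]
    exact Real.sqrt_le_sqrt hnl1
  have hsqrtnlpos : (0 : ℝ) < Real.sqrt nl := by linarith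
  have h32 : (nl : ℝ) ^ ((3 : ℝ) / 2) = (nl : ℝ) * Real.sqrt nl := by
    rw [show (3:ℝ)/2 = 1 + 1/2 by ring, Real.rpow_add hnlpos, Real.rpow_one,
      ← Real.sqrt_eq_rpow]
  have hγnl : (nl : ℝ) * Real.sqrt nl ≤ γ := h32 ▸ hγ1
  have hγge : (nl : ℝ) ≤ γ := le_trans (by nlinarith) hγnl
  have hγpos : 0 < γ := lt_of_lt_of_le hnlpos hγge
  have hsnn : 0 ≤ s := by
    apply div_nonneg _ (Real.sqrt_nonneg _)
    have : Real.sqrt cu ≤ 1 := Real.sqrt_le_one.mpr hcu1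
    linarith
  have hsq2 : 0 ≤ Real.sqrt 2 := Real.sqrt_nonneg 2
  -- first term
  have h1 : Real.sqrt 2 / (γ + 1) ≤ Real.sqrt 2 / nl := by
    apply div_le_div_of_nonneg_left hsq2 hnlpos
    linarith
  -- second term
  have hsplit : Real.sqrt (2 * nl) = Real.sqrt 2 * Real.sqrt nl := by
    rw [Real.sqrt_mul (by norm_num)]
  have h2 : Real.sqrt (2 * nl) * s * (lM + γ) / (γ ^ 2 + 1) ≤
      2 * Real.sqrt 2 * s / nl := by
    rw [hsplit]
    have step1 : Real.sqrt 2 * Real.sqrt nl * s * (lM + γ) / (γ ^ 2 + 1) ≤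
        Real.sqrt 2 * Real.sqrt nl * s * (2 * γ) / γ ^ 2 := by
      apply div_le_div₀ (by positivity) _ (by positivity) (by nlinarith)
      have : lM + γ ≤ 2 * γ := by linarith
      nlinarith [mul_nonneg (mul_nonneg hsq2 hsqrtnlpos.le) hsnn]
    have step2 : Real.sqrt 2 * Real.sqrt nl * s * (2 * γ) / γ ^ 2 =
        2 * Real.sqrt 2 * Real.sqrt nl * s / γ := by
      field_simp
    have step3 : 2 * Real.sqrt 2 * Real.sqrt nl * s / γ ≤
        2 * Real.sqrt 2 * Real.sqrt nl * s / ((nl : ℝ) * Real.sqrt nl) := by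
      apply div_le_div_of_nonneg_left (by positivity) (by positivity) hγnl
    have step4 : 2 * Real.sqrt 2 * Real.sqrt nl * s / ((nl : ℝ) * Real.sqrt nl) =
        2 * Real.sqrt 2 * s / nl := by
      field_simp
    linarith [step1, step2 ▸ step3, step4 ▸ step3]
  have hfin : (2 * Real.sqrt 2 + 4 * Real.sqrt 2 * s) / nl =
      2 * (Real.sqrt 2 / nl + 2 * Real.sqrt 2 * s / nl) := by
    field_simp
    ring
  rw [hfin]
  linarith
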